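/- If there exists a (c,t) LP-packing in an abelian group G of order t²c² relative to a subgroup U of order tc, and s divides t, then there exists an (sc, t/s) LP-packing in G relative to U. -/

import Mathlib

open Finset BigOperators

variable {G : Type*}

/-- Number of ordered pairs `(x,y)` with `x,y ∈ D`, `x ≠ y`, `x * y⁻¹ = g`. -/
noncomputable def diffCount [Group G] (D : Set G) (g : G) : ℕ :=
  Nat.card {p : G × G // p.1 ∈ D ∧ p.2 ∈ D ∧ p.1 ≠ p.2 ∧ p.1 * p.2⁻¹ = g}

/-- `D` is a `(v,k,λ,μ)` partial difference set in `G`. -/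
def IsPDS [Group G] (D : Set G) (v k : ℕ) (l m : ℤ) : Prop :=
  Nat.card G = v ∧ Nat.card D = k ∧
    ∀ g : G, g ≠ 1 →
      (g ∈ D → (diffCount D g : ℤ) = l) ∧ (g ∉ D → (diffCount D g : ℤ) = m)

/-- A regular PDS: a PDS avoiding the identity and closed under inversion. -/
def IsRegularPDS [Group G] (D : Set G) (v k : ℕ) (l m : ℤ) : Prop :=
  IsPDS D v k l m ∧ (1 : G) ∉ D ∧ D⁻¹ = D

/-- A regular `(n,r)` Latin square type PDS. -/
def IsLatinPDS [Group G] (D : Set G) (n r : ℕ) : Prop :=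
  IsRegularPDS D (n ^ 2) (r * (n - 1)) ((n : ℤ) + (r : ℤ) ^ 2 - 3 * r) ((r : ℤ) ^ 2 - r)

/-- A regular `(n,r)` negative Latin square type PDS. -/
def IsNegLatinPDS [Group G] (D : Set G) (n r : ℕ) : Prop :=
  IsRegularPDS D (n ^ 2) (r * (n + 1)) (-(n : ℤ) + (r : ℤ) ^ 2 + 3 * r) ((r : ℤ) ^ 2 + r)

/-- Character sum `χ(D) = ∑_{d ∈ D} χ(d)`. -/
noncomputable def charSum [Group G] (χ : G →* ℂˣ) (D : Set G) : ℂ :=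
  ∑ᶠ d ∈ D, (χ d : ℂ)

/-- The multiset of character sums `{χ(P 0), …, χ(P (t-1))}`. -/
noncomputable def charMultiset [Group G] {t : ℕ} (χ : G →* ℂˣ) (P : Fin t → Set G) :
    Multiset ℂ :=
  (Finset.univ.val : Multiset (Fin t)).map fun i => charSum χ (P i)

/-- `χ` is principal on the subgroup `U`. -/
def IsPrincipalOn [Group G] (χ : G →* ℂˣ) (U : Subgroup G) : Prop :=
  ∀ u ∈ U, χ u = 1

/-- A `(c,t)` LP-packing in `G` relative to `U`. -/
def IsLPPacking [CommGroup G] (c t : ℕ) (P : Fin t → Set G) (U : Subgroup G) : Prop :=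
  Nat.card G = t ^ 2 * c ^ 2 ∧ Nat.card U = t * c ∧
    (∀ i, IsLatinPDS (P i) (t * c) c) ∧
    (∀ i j, i ≠ j → Disjoint (P i) (P j)) ∧
    (⋃ i, P i) = Set.univ \ (U : Set G)

/-- A `(c,t-1)` NLP-packing in `G`. -/
def IsNLPPacking [CommGroup G] (c t : ℕ) (P : Fin (t - 1) → Set G) : Prop :=
  Nat.card G = t ^ 2 * c ^ 2 ∧
    (∀ i, IsNegLatinPDS (P i) (t * c) c) ∧
    IsNegLatinPDS (Set.univ \ ({1} ∪ ⋃ i, P i)) (t * c) (c - 1)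

/-- A `(c,t)` LP-partition in `G − V` relative to `H`. -/
def IsLPPartition [CommGroup G] (c t : ℕ) (R : Fin t → Set G) (V H : Subgroup G) : Prop :=
  Nat.card G = t ^ 2 * c ^ 2 ∧ Nat.card V = t * c ^ 2 ∧ H ≤ V ∧
    (∀ i, Nat.card (R i) = (t - 1) * c ^ 2) ∧
    (∀ i j, i ≠ j → Disjoint (R i) (R j)) ∧
    (⋃ i, R i) = Set.univ \ (V : Set G) ∧
    ∀ χ : G →* ℂˣ, χ ≠ 1 →
      (IsPrincipalOn χ V → charMultiset χ R = Multiset.replicate t (-(c : ℂ) ^ 2)) ∧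
      (¬ IsPrincipalOn χ V → IsPrincipalOn χ H →
        charMultiset χ R = Multiset.replicate t 0) ∧
      (¬ IsPrincipalOn χ H →
        charMultiset χ R = ((t : ℂ) - 1) * (c : ℂ) ::ₘ Multiset.replicate (t - 1) (-(c : ℂ)))


set_option linter.unusedSectionVars false
set_option maxHeartbeats 1000000

section Aux
attribute [local instance] Classical.propDecidable
variable {G : Type*} [CommGroup G] [Fintype G]

noncomputable def dfin (D : Set G) : Finset G := (Set.toFinite D).toFinset

@[simp] lemma mem_dfin {D : Set G} {x : G} : x ∈ dfin D ↔ x ∈ D := Set.Finite.mem_toFinset _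

noncomputable def SD (χ : G →* ℂˣ) (D : Set G) : ℂ := ∑ x ∈ dfin D, (χ x : ℂ)

lemma card_dfin (D : Set G) : Nat.card D = (dfin D).card := by
  rw [Nat.card_coe_set_eq, Set.ncard_eq_toFinset_card _ (Set.toFinite D)]; rfl

lemma sum_char_eq_zero {χ : G →* ℂˣ} (hχ : χ ≠ 1) : ∑ x : G, (χ x : ℂ) = 0 := by
  obtain ⟨a, ha⟩ : ∃ a, χ a ≠ 1 := by
    by_contra hc; push_neg at hc; exact hχ (MonoidHom.ext fun x => hc x)
  have h1 : (χ a : ℂ) * ∑ x : G, (χ x : ℂ) = ∑ x : G, (χ x : ℂ) := by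
    rw [Finset.mul_sum]
    exact Fintype.sum_equiv (Equiv.mulLeft a) _ _ (fun x => by simp [map_mul])
  have h2 : ((χ a : ℂ) - 1) * ∑ x : G, (χ x : ℂ) = 0 := by
    rw [sub_mul, one_mul, h1, sub_self]
  rcases mul_eq_zero.mp h2 with h | h
  · exact absurd (Units.ext (by simpa using sub_eq_zero.mp h)) ha
  · exact h

lemma sum_char_subgroup (χ : G →* ℂˣ) (U : Subgroup G) :
    ∑ u : U, (χ u : ℂ) = if IsPrincipalOn χ U then (Nat.card U : ℂ) else 0 := by
  split_ifs with hP
  · rw [Nat.card_eq_fintype_card]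
    have : ∀ u : U, (χ u : ℂ) = 1 := fun u => by
      have := hP u u.2; simp [this]
    simp [this]
  · have : (χ.comp U.subtype) ≠ 1 := by
      intro hc
      apply hP
      intro u hu
      have := DFunLike.congr_fun hc ⟨u, hu⟩
      simpa using this
    simpa using sum_char_eq_zero this

lemma sum_char_subgroup_dfin (χ : G →* ℂˣ) (U : Subgroup G) :
    ∑ x ∈ dfin ((U : Set G)), (χ x : ℂ)
      = if IsPrincipalOn χ U then (Nat.card U : ℂ) else 0 := by
  have h1 : ∑ x ∈ dfin ((U : Set G)), (χ x : ℂ) = ∑ u : U, (χ u : ℂ) := by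
    refine Finset.sum_bij (fun x hx => (⟨x, by simpa [mem_dfin] using hx⟩ : U)) ?_ ?_ ?_ ?_
    · intro a ha; exact Finset.mem_univ _
    · intro a ha b hb hab
      simpa using congrArg Subtype.val hab
    · intro u _
      refine ⟨u.1, ?_, rfl⟩
      simp [mem_dfin]
    · intro a ha; rfl
  rw [h1, sum_char_subgroup χ U]

/-- core product identity -/
lemma SD_mul_SD (χ : G →* ℂˣ) {D : Set G} (hDinv : D⁻¹ = D) :
    SD χ D * SD χ D = ∑ p ∈ dfin D ×ˢ dfin D, (χ (p.1 * p.2⁻¹) : ℂ) := by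
  have h2 : SD χ D = ∑ y ∈ dfin D, (χ y⁻¹ : ℂ) := by
    rw [SD]
    refine Finset.sum_nbij' (fun y => y⁻¹) (fun y => y⁻¹) ?_ ?_ ?_ ?_ ?_ <;>
      simp only [mem_dfin]
    · intro a ha; rw [← hDinv]; simpa using ha
    · intro a ha; rw [← hDinv] at ha; simpa using ha
    · intro a _; simp
    · intro a _; simp
    · intro a _; simp
  calc SD χ D * SD χ D = (∑ x ∈ dfin D, (χ x : ℂ)) * ∑ y ∈ dfin D, (χ y⁻¹ : ℂ) := by
        rw [← h2]; rfl
    _ = ∑ x ∈ dfin D, ∑ y ∈ dfin D, (χ x : ℂ) * (χ y⁻¹ : ℂ) := by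
        rw [Finset.sum_mul_sum]
    _ = ∑ p ∈ dfin D ×ˢ dfin D, (χ (p.1 * p.2⁻¹) : ℂ) := by
        rw [Finset.sum_product]
        congr 1; ext x; congr 1; ext y; rw [map_mul]; push_cast; ring
end Aux
section Aux2
attribute [local instance] Classical.propDecidable
variable {G : Type*} [CommGroup G] [Fintype G]

lemma diffCount_eq_card (D : Set G) {g : G} (hg : g ≠ 1) :
    diffCount D g = ((dfin D ×ˢ dfin D).filter fun p => p.1 * p.2⁻¹ = g).card := by
  rw [diffCount, Nat.card_eq_fintype_card, Fintype.card_subtype]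
  congr 1
  ext p
  simp only [Finset.mem_filter, Finset.mem_univ, true_and, Finset.mem_product, mem_dfin]
  constructor
  · rintro ⟨h1, h2, _, h4⟩; exact ⟨⟨h1, h2⟩, h4⟩
  · rintro ⟨⟨h1, h2⟩, h4⟩
    refine ⟨h1, h2, ?_, h4⟩
    intro hc
    rw [hc] at h4
    simp at h4
    exact hg h4.symm

lemma fiber_one_card (D : Set G) (hD1 : (1:G) ∉ D) :
    ((dfin D ×ˢ dfin D).filter fun p => p.1 * p.2⁻¹ = 1).card = (dfin D).card := by
  have : ((dfin D ×ˢ dfin D).filter fun p => p.1 * p.2⁻¹ = 1) = (dfin D).diag := by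
    rw [Finset.diag]
    congr 1
    ext p
    rw [Finset.mem_filter, Finset.mem_map]
    constructor
    · rintro ⟨h1, h2⟩
      exact ⟨p.1, (Finset.mem_product.mp h1).1, by ext <;> simp [Function.diag, mul_inv_eq_one.mp h2]⟩
    · rintro ⟨x, hx, rfl⟩
      simp [Function.diag, hx]
  rw [this, Finset.diag_card]

/-- the main convolution identity -/
lemma SD_sq (χ : G →* ℂˣ) {D : Set G} (hD1 : (1:G) ∉ D) (hDinv : D⁻¹ = D) :
    SD χ D * SD χ D
      = ((dfin D).card : ℂ) + ∑ g ∈ Finset.univ.filter (fun g : G => g ≠ 1),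
          (diffCount D g : ℂ) * (χ g : ℂ) := by
  rw [SD_mul_SD χ hDinv]
  have hfib := Finset.sum_fiberwise (dfin D ×ˢ dfin D)
      (fun p : G × G => p.1 * p.2⁻¹) (fun p => (χ (p.1 * p.2⁻¹) : ℂ))
  rw [← hfib]
  have hconst : ∀ g : G, ∑ p ∈ (dfin D ×ˢ dfin D).filter (fun p => p.1 * p.2⁻¹ = g),
      (χ (p.1 * p.2⁻¹) : ℂ)
      = (((dfin D ×ˢ dfin D).filter fun p => p.1 * p.2⁻¹ = g).card : ℂ) * (χ g : ℂ) := by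
    intro g
    rw [Finset.sum_congr rfl (fun p hp => ?_), Finset.sum_const, nsmul_eq_mul]
    rw [Finset.mem_filter] at hp
    rw [hp.2]
  calc ∑ g : G, ∑ p ∈ (dfin D ×ˢ dfin D).filter (fun p => p.1 * p.2⁻¹ = g),
        (χ (p.1 * p.2⁻¹) : ℂ)
      = ∑ g : G, (((dfin D ×ˢ dfin D).filter fun p => p.1 * p.2⁻¹ = g).card : ℂ) * (χ g : ℂ) := by
        exact Finset.sum_congr rfl fun g _ => hconst g
    _ = _ := by
        rw [← Finset.sum_filter_add_sum_filter_not Finset.univ (fun g : G => g ≠ 1)]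
        have h1 : Finset.univ.filter (fun g : G => ¬ g ≠ 1) = {1} := by
          ext g; simp [not_not]
        rw [h1]
        rw [Finset.sum_singleton, fiber_one_card D hD1]
        simp only [map_one, Units.val_one, mul_one]
        rw [add_comm]
        congr 1
        refine Finset.sum_congr rfl fun g hg => ?_
        rw [Finset.mem_filter] at hg
        rw [diffCount_eq_card D hg.2]
end Aux2
section Dual
attribute [local instance] Classical.propDecidable
variable {G : Type*} [CommGroup G] [Fintype G]

lemma enough_roots : HasEnoughRootsOfUnity ℂ (Monoid.exponent G) := by
  haveI : NeZero ((Monoid.exponent G : ℂ)) :=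
    ⟨Nat.cast_ne_zero.mpr (Monoid.exponent_ne_zero_of_finite)⟩
  infer_instance

lemma sum_dual [Fintype (G →* ℂˣ)]
    (hcard : Fintype.card (G →* ℂˣ) = Fintype.card G) (g : G) :
    ∑ χ : G →* ℂˣ, (χ g : ℂ) = if g = 1 then (Fintype.card G : ℂ) else 0 := by
  haveI := enough_roots (G := G)
  split_ifs with hg
  · subst hg; simp [hcard]
  · let E : (G →* ℂˣ) →* ℂˣ :=
      { toFun := fun χ => χ g
        map_one' := rfl
        map_mul' := fun χ ψ => rfl }
    have hE : E ≠ 1 := by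
      obtain ⟨φ, hφ⟩ := CommGroup.exists_apply_ne_one_of_hasEnoughRootsOfUnity G ℂ hg
      intro hc
      exact hφ (by simpa [E] using DFunLike.congr_fun hc φ)
    exact sum_char_eq_zero hE
end Dual
section Inv
attribute [local instance] Classical.propDecidable
variable {G : Type*} [CommGroup G] [Fintype G] [Fintype (G →* ℂˣ)]

lemma SD_one (D : Set G) : SD 1 D = ((dfin D).card : ℂ) := by
  simp [SD]

lemma inv_formula (hcard : Fintype.card (G →* ℂˣ) = Fintype.card G)
    {D : Set G} (hDinv : D⁻¹ = D) {g : G} (hg : g ≠ 1) :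
    ∑ χ : G →* ℂˣ, SD χ D * SD χ D * (χ g⁻¹ : ℂ)
      = (Fintype.card G : ℂ) * (diffCount D g : ℂ) := by
  have step1 : ∀ χ : G →* ℂˣ, SD χ D * SD χ D * (χ g⁻¹ : ℂ)
      = ∑ p ∈ dfin D ×ˢ dfin D, (χ (p.1 * p.2⁻¹ * g⁻¹) : ℂ) := by
    intro χ
    rw [SD_mul_SD χ hDinv, Finset.sum_mul]
    refine Finset.sum_congr rfl fun p _ => ?_
    simp only [map_mul, Units.val_mul]
  calc ∑ χ : G →* ℂˣ, SD χ D * SD χ D * (χ g⁻¹ : ℂ)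
      = ∑ χ : G →* ℂˣ, ∑ p ∈ dfin D ×ˢ dfin D, (χ (p.1 * p.2⁻¹ * g⁻¹) : ℂ) :=
        Finset.sum_congr rfl fun χ _ => step1 χ
    _ = ∑ p ∈ dfin D ×ˢ dfin D, ∑ χ : G →* ℂˣ, (χ (p.1 * p.2⁻¹ * g⁻¹) : ℂ) :=
        Finset.sum_comm
    _ = ∑ p ∈ dfin D ×ˢ dfin D,
          (if p.1 * p.2⁻¹ * g⁻¹ = 1 then (Fintype.card G : ℂ) else 0) :=
        Finset.sum_congr rfl fun p _ => sum_dual hcard _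
    _ = ∑ p ∈ dfin D ×ˢ dfin D,
          (if p.1 * p.2⁻¹ = g then (Fintype.card G : ℂ) else 0) := by
        refine Finset.sum_congr rfl fun p _ => ?_
        congr 1
        simp [mul_inv_eq_one]
    _ = (Fintype.card G : ℂ) * (diffCount D g : ℂ) := by
        rw [Finset.sum_ite, Finset.sum_const, Finset.sum_const_zero, add_zero,
          nsmul_eq_mul, diffCount_eq_card D hg]
        ring

lemma SD_indic (hcard : Fintype.card (G →* ℂˣ) = Fintype.card G)
    (D : Set G) {g : G} :
    ∑ χ : G →* ℂˣ, SD χ D * (χ g⁻¹ : ℂ)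
      = (Fintype.card G : ℂ) * (if g ∈ D then 1 else 0) := by
  calc ∑ χ : G →* ℂˣ, SD χ D * (χ g⁻¹ : ℂ)
      = ∑ χ : G →* ℂˣ, ∑ x ∈ dfin D, (χ (x * g⁻¹) : ℂ) := by
        refine Finset.sum_congr rfl fun χ _ => ?_
        rw [SD, Finset.sum_mul]
        refine Finset.sum_congr rfl fun x _ => ?_
        rw [map_mul, Units.val_mul]
    _ = ∑ x ∈ dfin D, ∑ χ : G →* ℂˣ, (χ (x * g⁻¹) : ℂ) := Finset.sum_comm
    _ = ∑ x ∈ dfin D, (if x * g⁻¹ = 1 then (Fintype.card G : ℂ) else 0) :=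
        Finset.sum_congr rfl fun x _ => sum_dual hcard _
    _ = ∑ x ∈ dfin D, (if x = g then (Fintype.card G : ℂ) else 0) := by
        refine Finset.sum_congr rfl fun x _ => ?_
        congr 1
        simp [mul_inv_eq_one]
    _ = (Fintype.card G : ℂ) * (if g ∈ D then 1 else 0) := by
        rw [Finset.sum_ite_eq' (dfin D) g (fun _ => (Fintype.card G : ℂ))]
        by_cases hgD : g ∈ D <;> simp [hgD]
end Inv



section PDSlemmas
attribute [local instance] Classical.propDecidable
variable {G : Type*} [CommGroup G] [Fintype G]

lemma erase_one_eq_filter :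
    (Finset.univ.erase (1 : G)) = Finset.univ.filter (fun g : G => g ≠ 1) := by
  ext g; simp [Finset.mem_erase, and_comm]

lemma sum_char_erase_one {χ : G →* ℂˣ} (hχ : χ ≠ 1) :
    ∑ g ∈ Finset.univ.erase (1 : G), (χ g : ℂ) = -1 := by
  have h := Finset.add_sum_erase Finset.univ (fun g : G => (χ g : ℂ)) (Finset.mem_univ 1)
  rw [sum_char_eq_zero hχ] at h
  have := eq_neg_of_add_eq_zero_right h
  simpa using this

/-- forward: character sums of a Latin square type PDS satisfy the quadratic -/
lemma latin_charsum {D : Set G} {n r : ℕ} (hn : 1 ≤ n) (hL : IsLatinPDS D n r)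
    {χ : G →* ℂˣ} (hχ : χ ≠ 1) :
    SD χ D = (n : ℂ) - r ∨ SD χ D = -(r : ℂ) := by
  obtain ⟨⟨hv, hk, hcnt⟩, h1D, hinv⟩ := hL
  have hsq := SD_sq χ h1D hinv
  rw [← erase_one_eq_filter] at hsq
  -- split the sum over `univ.erase 1` into `D` and its complement
  have hsplit := Finset.sum_filter_add_sum_filter_not (Finset.univ.erase (1:G))
      (fun g => g ∈ D) (fun g => (diffCount D g : ℂ) * (χ g : ℂ))
  have hfD : (Finset.univ.erase (1:G)).filter (fun g => g ∈ D) = dfin D := by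
    ext g
    simp only [Finset.mem_filter, Finset.mem_erase, Finset.mem_univ, true_and, and_true, mem_dfin]
    exact ⟨fun h => h.2, fun h => ⟨fun hc : g = 1 => h1D (hc ▸ h), h⟩⟩
  have hDval : ∑ g ∈ dfin D, (diffCount D g : ℂ) * (χ g : ℂ)
      = ((n : ℂ) + (r:ℂ)^2 - 3*r) * SD χ D := by
    rw [SD, Finset.mul_sum]
    refine Finset.sum_congr rfl fun g hg => ?_
    rw [mem_dfin] at hg
    have hg1 : g ≠ 1 := fun hc : g = 1 => h1D (hc ▸ hg)
    have := ((hcnt g hg1).1 hg)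
    have hc : (diffCount D g : ℂ) = (n : ℂ) + (r:ℂ)^2 - 3*r := by
      have := congrArg (fun z : ℤ => (z : ℂ)) this
      push_cast at this ⊢
      linear_combination this
    rw [hc]
  have hCval : ∑ g ∈ (Finset.univ.erase (1:G)).filter (fun g => ¬ g ∈ D),
      (diffCount D g : ℂ) * (χ g : ℂ) = ((r:ℂ)^2 - r) * (-1 - SD χ D) := by
    have hval : ∀ g ∈ (Finset.univ.erase (1:G)).filter (fun g => ¬ g ∈ D),
        (diffCount D g : ℂ) = (r:ℂ)^2 - r := by
      intro g hg
      rw [Finset.mem_filter, Finset.mem_erase] at hg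
      have := (hcnt g hg.1.1).2 hg.2
      have := congrArg (fun z : ℤ => (z : ℂ)) this
      push_cast at this ⊢
      linear_combination this
    rw [Finset.sum_congr rfl fun g hg => by rw [hval g hg]]
    rw [← Finset.mul_sum]
    congr 1
    have h2 : ∑ g ∈ (Finset.univ.erase (1:G)).filter (fun g => ¬ g ∈ D), (χ g : ℂ)
        = (∑ g ∈ Finset.univ.erase (1:G), (χ g : ℂ)) - ∑ g ∈ dfin D, (χ g : ℂ) := by
      rw [eq_sub_iff_add_eq, add_comm, ← hfD]
      exact Finset.sum_filter_add_sum_filter_not (Finset.univ.erase (1:G)) (fun g => g ∈ D) _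
    rw [h2, sum_char_erase_one hχ]
    rfl
  have hkc : ((dfin D).card : ℂ) = (r:ℂ) * n - r := by
    rw [← card_dfin, hk]
    push_cast [Nat.cast_sub hn]
    ring
  rw [← hsplit, hfD, hDval, hCval, hkc] at hsq
  have hfactor : (SD χ D - ((n:ℂ) - r)) * (SD χ D + r) = 0 := by
    linear_combination hsq
  rcases mul_eq_zero.mp hfactor with h | h
  · left; exact sub_eq_zero.mp h
  · right; exact eq_neg_of_add_eq_zero_left h

end PDSlemmas


section Converse
attribute [local instance] Classical.propDecidable
variable {G : Type*} [CommGroup G] [Fintype G]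

lemma count_from_quad [Fintype (G →* ℂˣ)]
    (hcard : Fintype.card (G →* ℂˣ) = Fintype.card G)
    {D : Set G} (hinv : D⁻¹ = D) (A B : ℂ)
    (hquad : ∀ χ : G →* ℂˣ, χ ≠ 1 → SD χ D * SD χ D = A + B * SD χ D)
    {g : G} (hg : g ≠ 1) :
    (Fintype.card G : ℂ) * (diffCount D g : ℂ)
      = ((dfin D).card : ℂ)^2 - A - B * ((dfin D).card : ℂ)
        + B * (Fintype.card G : ℂ) * (if g ∈ D then 1 else 0) := by
  have hginv : g⁻¹ ≠ (1:G) := by simpa using hg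
  have hmain := inv_formula hcard hinv hg
  set f : (G →* ℂˣ) → ℂ := fun χ => SD χ D * SD χ D * (χ g⁻¹ : ℂ) with hf
  have hsplit := Finset.add_sum_erase Finset.univ f (Finset.mem_univ (1 : G →* ℂˣ))
  have hf1 : f 1 = ((dfin D).card : ℂ) * ((dfin D).card : ℂ) := by
    simp [hf, SD_one]
  -- sum of characters at g⁻¹ over nontrivial characters
  have hA : ∑ χ ∈ Finset.univ.erase (1 : G →* ℂˣ), (χ g⁻¹ : ℂ) = -1 := by
    have h0 : ∑ χ : G →* ℂˣ, (χ g⁻¹ : ℂ) = 0 := by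
      rw [sum_dual hcard g⁻¹, if_neg hginv]
    have h1 := Finset.add_sum_erase Finset.univ (fun χ : G →* ℂˣ => (χ g⁻¹ : ℂ))
      (Finset.mem_univ (1 : G →* ℂˣ))
    rw [h0] at h1
    simpa using eq_neg_of_add_eq_zero_right h1
  -- sum of SD · χ(g⁻¹) over nontrivial characters
  have hB : ∑ χ ∈ Finset.univ.erase (1 : G →* ℂˣ), SD χ D * (χ g⁻¹ : ℂ)
      = (Fintype.card G : ℂ) * (if g ∈ D then 1 else 0) - ((dfin D).card : ℂ) := by
    have h1 := Finset.add_sum_erase Finset.univ (fun χ : G →* ℂˣ => SD χ D * (χ g⁻¹ : ℂ))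
      (Finset.mem_univ (1 : G →* ℂˣ))
    rw [SD_indic hcard D] at h1
    have h2 : ((dfin D).card : ℂ) + ∑ χ ∈ Finset.univ.erase (1 : G →* ℂˣ),
        SD χ D * (χ g⁻¹ : ℂ) = (Fintype.card G : ℂ) * (if g ∈ D then 1 else 0) := by
      rw [← h1]; simp [SD_one]
    exact eq_sub_of_add_eq' h2
  have herase : ∑ χ ∈ Finset.univ.erase (1 : G →* ℂˣ), f χ
      = A * (-1) + B * ((Fintype.card G : ℂ) * (if g ∈ D then 1 else 0)
          - ((dfin D).card : ℂ)) := by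
    have hstep : ∀ χ ∈ Finset.univ.erase (1 : G →* ℂˣ),
        f χ = A * (χ g⁻¹ : ℂ) + B * (SD χ D * (χ g⁻¹ : ℂ)) := by
      intro χ hχ
      rw [Finset.mem_erase] at hχ
      rw [hf]; dsimp only
      rw [hquad χ hχ.1]; ring
    rw [Finset.sum_congr rfl hstep, Finset.sum_add_distrib, ← Finset.mul_sum, ← Finset.mul_sum,
      hA, hB]
  rw [← hmain, ← hsplit, hf1, herase]
  ring

end Converse


section BuildPDS
attribute [local instance] Classical.propDecidable
variable {G : Type*} [CommGroup G] [Fintype G]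

lemma isLatinPDS_of_charsums {D : Set G} {n r : ℕ} (hn : 1 ≤ n)
    (hG : Nat.card G = n^2) (h1D : (1:G) ∉ D) (hinv : D⁻¹ = D)
    (hk : Nat.card D = r*(n-1))
    (hquad : ∀ χ : G →* ℂˣ, χ ≠ 1 →
      SD χ D * SD χ D = ((r:ℂ)*(n:ℂ) - (r:ℂ)^2) + ((n:ℂ) - 2*(r:ℂ)) * SD χ D) :
    IsLatinPDS D n r := by
  haveI := enough_roots (G := G)
  obtain ⟨e⟩ := CommGroup.monoidHom_mulEquiv_of_hasEnoughRootsOfUnity G ℂ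
  letI : Fintype (G →* ℂˣ) := Fintype.ofEquiv G e.toEquiv.symm
  have hcard : Fintype.card (G →* ℂˣ) = Fintype.card G := Fintype.card_congr e.toEquiv
  have hcardG : (Fintype.card G : ℂ) = ((n:ℂ))^2 := by
    rw [← Nat.card_eq_fintype_card, hG]; push_cast; ring
  have hkc : ((dfin D).card : ℂ) = (r:ℂ)*(n:ℂ) - (r:ℂ) := by
    rw [← card_dfin, hk]
    push_cast [Nat.cast_sub hn]
    ring
  have hnne : ((n:ℂ))^2 ≠ 0 := by
    have h0 : (n:ℂ) ≠ 0 := Nat.cast_ne_zero.mpr (by omega)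
    exact pow_ne_zero 2 h0
  have hcount : ∀ g : G, g ≠ 1 → (diffCount D g : ℂ)
      = ((r:ℂ)^2 - (r:ℂ)) + ((n:ℂ) - 2*(r:ℂ)) * (if g ∈ D then 1 else 0) := by
    intro g hg
    have h := count_from_quad hcard hinv _ _ hquad hg
    rw [hcardG, hkc] at h
    apply mul_left_cancel₀ hnne
    rw [h]
    ring
  refine ⟨⟨hG, hk, fun g hg1 => ⟨fun hgD => ?_, fun hgD => ?_⟩⟩, h1D, hinv⟩
  · have h := hcount g hg1
    rw [if_pos hgD] at h
    have h2 : ((diffCount D g : ℤ) : ℂ) = (((n:ℤ) + (r:ℤ)^2 - 3*(r:ℤ) : ℤ) : ℂ) := by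
      push_cast
      linear_combination h
    exact_mod_cast h2
  · have h := hcount g hg1
    rw [if_neg hgD] at h
    have h2 : ((diffCount D g : ℤ) : ℂ) = (((r:ℤ)^2 - (r:ℤ) : ℤ) : ℂ) := by
      push_cast
      linear_combination h
    exact_mod_cast h2

end BuildPDS


section Assembly
attribute [local instance] Classical.propDecidable
variable {G : Type*} [CommGroup G] [Fintype G]

lemma dfin_iUnion {k : ℕ} (A : Fin k → Set G) :
    dfin (⋃ i, A i) = Finset.univ.biUnion (fun i => dfin (A i)) := by
  ext x; simp [mem_dfin]

lemma pairwise_dfin {k : ℕ} {A : Fin k → Set G}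
    (hd : ∀ i j, i ≠ j → Disjoint (A i) (A j)) :
    ((Finset.univ : Finset (Fin k)) : Set (Fin k)).PairwiseDisjoint (fun i => dfin (A i)) := by
  intro i _ j _ hij
  rw [Function.onFun, Finset.disjoint_left]
  intro x hx hx'
  rw [mem_dfin] at hx hx'
  exact Set.disjoint_left.mp (hd i j hij) hx hx'

lemma SD_iUnion {k : ℕ} (χ : G →* ℂˣ) (A : Fin k → Set G)
    (hd : ∀ i j, i ≠ j → Disjoint (A i) (A j)) :
    SD χ (⋃ i, A i) = ∑ i, SD χ (A i) := by
  rw [SD, dfin_iUnion, Finset.sum_biUnion (pairwise_dfin hd)]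
  rfl

lemma card_dfin_iUnion {k : ℕ} (A : Fin k → Set G)
    (hd : ∀ i j, i ≠ j → Disjoint (A i) (A j)) :
    (dfin (⋃ i, A i)).card = ∑ i, (dfin (A i)).card := by
  rw [dfin_iUnion, Finset.card_biUnion]
  intro i _ j _ hij
  exact pairwise_dfin hd (Finset.mem_coe.mpr (Finset.mem_univ i))
    (Finset.mem_coe.mpr (Finset.mem_univ j)) hij

lemma sum_two_values {k : ℕ} (S : Fin k → ℂ) (a b : ℂ)
    (hvals : ∀ i, S i = a ∨ S i = b) :
    ∑ i, S i = ((Finset.univ.filter (fun i => S i = a)).card : ℂ) * (a - b) + k * b := by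
  set T := Finset.univ.filter (fun i => S i = a) with hT
  have hsub : T ⊆ Finset.univ := Finset.subset_univ T
  have hsplit := Finset.sum_sdiff (f := S) hsub
  have h1 : ∑ i ∈ T, S i = (T.card : ℂ) * a := by
    rw [Finset.sum_congr rfl (fun i hi => show S i = a by
      rw [hT, Finset.mem_filter] at hi; exact hi.2)]
    rw [Finset.sum_const, nsmul_eq_mul]
  have h2 : ∑ i ∈ Finset.univ \ T, S i = ((Finset.univ \ T).card : ℂ) * b := by
    rw [Finset.sum_congr rfl (fun i hi => ?_), Finset.sum_const, nsmul_eq_mul]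
    rw [Finset.mem_sdiff, hT, Finset.mem_filter] at hi
    have : ¬ S i = a := fun hc => hi.2 ⟨Finset.mem_univ i, hc⟩
    exact (hvals i).resolve_left this
  have hcard : (Finset.univ \ T).card = k - T.card := by
    rw [Finset.card_sdiff_of_subset hsub, Finset.card_univ, Fintype.card_fin]
  have hle : T.card ≤ k := by
    have := Finset.card_le_card hsub
    rwa [Finset.card_univ, Fintype.card_fin] at this
  rw [← hsplit, h1, h2, hcard]
  push_cast [Nat.cast_sub hle]
  ring

end Assembly

theorem stmt_7 {G : Type*} [CommGroup G] [Finite G] (c t s : ℕ) (U : Subgroup G)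
    (P : Fin t → Set G) (h : IsLPPacking c t P U) (hs : s ∣ t) :
    ∃ Q : Fin (t / s) → Set G, IsLPPacking (s * c) (t / s) Q U := by
  classical
  letI : Fintype G := Fintype.ofFinite G
  obtain ⟨hG, hU, hPDS, hdisj, hcover⟩ := h
  have hpos : 0 < Nat.card G := Nat.card_pos
  rw [hG] at hpos
  have ht : 0 < t := by
    rcases Nat.eq_zero_or_pos t with h0 | h0
    · rw [h0] at hpos; simp at hpos
    · exact h0
  have hc : 0 < c := by
    rcases Nat.eq_zero_or_pos c with h0 | h0
    · rw [h0] at hpos; simp at hpos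
    · exact h0
  have hs0 : 0 < s := by
    rcases Nat.eq_zero_or_pos s with h0 | h0
    · exfalso; subst h0; exact absurd (Nat.eq_zero_of_zero_dvd hs) (by omega)
    · exact h0
  have hts : t / s * s = t := Nat.div_mul_cancel hs
  have harith : t / s * (s * c) = t * c := by rw [← Nat.mul_assoc, hts]
  have hn1 : 1 ≤ t * c := Nat.one_le_iff_ne_zero.mpr (by positivity)
  have htc0 : ((t : ℂ) * c) ≠ 0 := by
    have h1 : (t:ℂ) ≠ 0 := Nat.cast_ne_zero.mpr (by omega)
    have h2 : (c:ℂ) ≠ 0 := Nat.cast_ne_zero.mpr (by omega)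
    exact mul_ne_zero h1 h2
  -- index bookkeeping
  let e : Fin (t / s) × Fin s ≃ Fin t := finProdFinEquiv.trans (finCongr hts)
  let Q : Fin (t / s) → Set G := fun j => ⋃ i : Fin s, P (e (j, i))
  have hedisj : ∀ (j : Fin (t/s)) (i i' : Fin s), i ≠ i' →
      Disjoint (P (e (j, i))) (P (e (j, i'))) := by
    intro j i i' hii
    exact hdisj _ _ (fun hc => hii (by
      have := e.injective hc
      exact (Prod.mk.injEq _ _ _ _).mp this |>.2))
  -- the double union is the whole packing
  have hQU : ⋃ j, Q j = ⋃ k, P k := by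
    ext x
    simp only [Q, Set.mem_iUnion]
    constructor
    · rintro ⟨j, i, hx⟩; exact ⟨e (j, i), hx⟩
    · rintro ⟨k, hx⟩
      refine ⟨(e.symm k).1, (e.symm k).2, ?_⟩
      rwa [Prod.mk.eta, e.apply_symm_apply]
  -- global character sum facts
  have hUsum : ∀ χ : G →* ℂˣ,
      ∑ x ∈ dfin ((U : Set G)), (χ x : ℂ)
        = if IsPrincipalOn χ U then ((t * c : ℕ) : ℂ) else 0 := by
    intro χ
    rw [sum_char_subgroup_dfin χ U, hU]
  have hSDall : ∀ χ : G →* ℂˣ, χ ≠ 1 →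
      ∑ k, SD χ (P k) = -(if IsPrincipalOn χ U then ((t * c : ℕ) : ℂ) else 0) := by
    intro χ hχ
    rw [← SD_iUnion χ P hdisj, hcover, SD]
    have hd : dfin (Set.univ \ (U : Set G)) = Finset.univ \ dfin ((U : Set G)) := by
      ext x; simp [mem_dfin]
    rw [hd, Finset.sum_sdiff_eq_sub (Finset.subset_univ _), sum_char_eq_zero hχ, zero_sub,
      hUsum χ]
  -- the candidate packing
  refine ⟨Q, ?_, ?_, ?_, ?_, ?_⟩
  · have hpow : (t/s)^2 * (s*c)^2 = (t/s*(s*c))^2 := by ring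
    rw [hG, hpow, harith]
    ring
  · rw [hU, harith]
  · -- each block union is a Latin square type PDS
    intro j
    rw [harith]
    have hdj : ∀ i i' : Fin s, i ≠ i' →
        Disjoint (P (e (j, i))) (P (e (j, i'))) := hedisj j
    have hsubQ : Q j ⊆ Set.univ \ (U : Set G) := by
      rw [← hcover]
      intro x hx
      rw [Set.mem_iUnion] at hx ⊢
      obtain ⟨i, hi⟩ := hx
      exact ⟨e (j, i), hi⟩
    have h1Q : (1 : G) ∉ Q j := by
      intro hx
      have := hsubQ hx
      exact this.2 U.one_mem
    have hinvQ : (Q j)⁻¹ = Q j := by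
      ext x
      simp only [Q, Set.mem_inv, Set.mem_iUnion]
      constructor
      · rintro ⟨i, hi⟩
        refine ⟨i, ?_⟩
        have hPinv := (hPDS (e (j, i))).2.2
        rw [← hPinv]
        simpa using hi
      · rintro ⟨i, hi⟩
        refine ⟨i, ?_⟩
        have hPinv := (hPDS (e (j, i))).2.2
        rw [← hPinv] at hi
        simpa using hi
    have hkQ : Nat.card (Q j) = (s * c) * (t * c - 1) := by
      have hQdef : Q j = ⋃ i : Fin s, P (e (j, i)) := rfl
      rw [card_dfin, hQdef, card_dfin_iUnion _ hdj]
      have : ∀ i : Fin s, (dfin (P (e (j, i)))).card = c * (t * c - 1) := by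
        intro i
        rw [← card_dfin]
        exact (hPDS (e (j, i))).1.2.1
      rw [Finset.sum_congr rfl (fun i _ => this i), Finset.sum_const, smul_eq_mul,
        Finset.card_univ, Fintype.card_fin, ← Nat.mul_assoc]
    refine isLatinPDS_of_charsums hn1 (by rw [hG]; ring) h1Q hinvQ hkQ ?_
    -- the character sum quadratic for the block union
    intro χ hχ
    have hvals : ∀ k, SD χ (P k) = ((t * c : ℕ) : ℂ) - (c : ℂ)
        ∨ SD χ (P k) = -(c : ℂ) := fun k => latin_charsum hn1 (hPDS k) hχ
    -- global multiplicity
    set Tg : Finset (Fin t) :=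
      Finset.univ.filter (fun k => SD χ (P k) = ((t * c : ℕ) : ℂ) - (c : ℂ)) with hTg
    have hglobal : ∑ k, SD χ (P k)
        = (Tg.card : ℂ) * ((((t * c : ℕ) : ℂ) - (c : ℂ)) - (-(c : ℂ))) + (t : ℂ) * (-(c : ℂ)) :=
      sum_two_values (fun k => SD χ (P k)) _ _ hvals
    rw [hSDall χ hχ] at hglobal
    have hTg1 : Tg.card ≤ 1 := by
      by_cases hprin : IsPrincipalOn χ U
      · rw [if_pos hprin] at hglobal
        have h0 : (Tg.card : ℂ) * ((t : ℂ) * c) = 0 := by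
          push_cast at hglobal ⊢
          linear_combination -hglobal
        have := (mul_eq_zero.mp h0).resolve_right htc0
        have : Tg.card = 0 := by exact_mod_cast this
        omega
      · rw [if_neg hprin] at hglobal
        have h0 : (Tg.card : ℂ) * ((t : ℂ) * c) = (t : ℂ) * c := by
          push_cast at hglobal ⊢
          linear_combination -hglobal
        have h1' : ((Tg.card : ℂ)) * ((t:ℂ) * c) = 1 * ((t:ℂ) * c) := by
          linear_combination h0
        have h1 : (Tg.card : ℂ) = 1 := mul_right_cancel₀ htc0 h1'
        have : Tg.card = 1 := by exact_mod_cast h1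
        omega
    -- block multiplicity
    set Tb : Finset (Fin s) :=
      Finset.univ.filter
        (fun i => SD χ (P (e (j, i))) = ((t * c : ℕ) : ℂ) - (c : ℂ)) with hTb
    have hTb1 : Tb.card ≤ 1 := by
      refine le_trans ?_ hTg1
      apply Finset.card_le_card_of_injOn (fun i => e (j, i))
      · intro i hi
        simp only [Finset.mem_coe, hTb, Finset.mem_filter] at hi
        simp only [Finset.mem_coe, hTg, Finset.mem_filter]
        exact ⟨Finset.mem_univ _, hi.2⟩
      · intro i _ i' _ hii
        have := e.injective hii
        exact ((Prod.mk.injEq _ _ _ _).mp this).2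
    have hblock : ∑ i : Fin s, SD χ (P (e (j, i)))
        = (Tb.card : ℂ) * ((((t * c : ℕ) : ℂ) - (c : ℂ)) - (-(c : ℂ))) + (s : ℂ) * (-(c : ℂ)) :=
      sum_two_values (fun i => SD χ (P (e (j, i)))) _ _ (fun i => hvals (e (j, i)))
    have hSQ : SD χ (Q j) = ∑ i : Fin s, SD χ (P (e (j, i))) :=
      SD_iUnion χ _ hdj
    rw [← hSQ] at hblock
    -- finish by cases on the block multiplicity
    rcases Nat.le_one_iff_eq_zero_or_eq_one.mp hTb1 with hm | hm
    · rw [hm] at hblock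
      rw [hblock]
      push_cast
      ring
    · rw [hm] at hblock
      rw [hblock]
      push_cast
      ring
  · -- pairwise disjoint
    intro j j' hjj
    rw [Set.disjoint_iUnion_left]
    intro i
    rw [Set.disjoint_iUnion_right]
    intro i'
    refine hdisj _ _ (fun hc => hjj ?_)
    have := e.injective hc
    exact ((Prod.mk.injEq _ _ _ _).mp this).1
  · rw [hQU, hcover]
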